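/- For integers with k ≥ 1, j ≥ k+2, j ≤ n, the partial sum D2 := Σ_{s=k-1}^{n-3} C(j-3,k-1)·C(n-j,s-k+1)/C(n-1,s+1) equals [k/(j-1)]·[(j-k-1)/(j-2)]·(n/j). -/

import Mathlib

lemma natid (u b : ℕ) : (u+1) * u.choose b = (u+1).choose b * (u+1-b) := by
  rw [← Nat.choose_succ_right_eq, ← Nat.add_one_mul_choose_eq]

lemma recip (u b : ℕ) (hb : b ≤ u) :
    (1:ℝ)/((u+1).choose b) + 1/((u+1).choose (b+1)) = ((u:ℝ)+2)/(((u:ℝ)+1)*(u.choose b)) := by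
  have hc : ((u+1-b : ℕ) : ℝ) = (u:ℝ)+1-b := by
    have hb' : b ≤ u+1 := by omega
    push_cast [hb']; ring
  have e1 : ((u:ℝ)+1) * u.choose b = ((u+1).choose b : ℝ) * ((u:ℝ)+1-b) := by
    rw [← hc]; exact_mod_cast natid u b
  have e2 : ((u:ℝ)+1) * u.choose b = ((u+1).choose (b+1) : ℝ) * ((b:ℝ)+1) := by
    exact_mod_cast Nat.add_one_mul_choose_eq u b
  have n0 : ((u.choose b : ℝ)) ≠ 0 := Nat.cast_ne_zero.2 (Nat.choose_pos hb).ne'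
  have n1 : (((u+1).choose b : ℝ)) ≠ 0 :=
    Nat.cast_ne_zero.2 (Nat.choose_pos (by omega)).ne'
  have n2 : (((u+1).choose (b+1) : ℝ)) ≠ 0 :=
    Nat.cast_ne_zero.2 (Nat.choose_pos (by omega)).ne'
  have nu : ((u:ℝ)+1) ≠ 0 := by positivity
  field_simp
  linear_combination ((u+1).choose (b+1) : ℝ) * e1 + ((u+1).choose b : ℝ) * e2
lemma key (v : ℕ) : ∀ u b : ℕ, b ≤ u →
    ∑ a ∈ Finset.range (v+1), ((v.choose a : ℝ) / ((u+v).choose (a+b)))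
      = ((u:ℝ)+v+1) / (((u:ℝ)+1) * u.choose b) := by
  induction v with
  | zero =>
    intro u b hb
    have n0 : ((u.choose b:ℝ)) ≠ 0 := Nat.cast_ne_zero.2 (Nat.choose_pos hb).ne'
    have nu : ((u:ℝ)+1) ≠ 0 := by positivity
    simp only [Finset.sum_range_one, Nat.choose_zero_right, Nat.cast_one, Nat.add_zero,
      Nat.zero_add, Nat.cast_zero]
    field_simp
    ring
  | succ v ih =>
    intro u b hb
    have hg : ∑ a ∈ Finset.range (v+1+1), ((v.choose a : ℝ) / (((u+1)+v).choose (a+b)))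
        = ∑ a ∈ Finset.range (v+1), ((v.choose a : ℝ) / (((u+1)+v).choose (a+b))) := by
      rw [Finset.sum_range_succ]
      simp [Nat.choose_eq_zero_of_lt (by omega : v < v+1)]
    have step : ∑ a ∈ Finset.range (v+1+1), (((v+1).choose a : ℝ) / ((u+(v+1)).choose (a+b)))
        = (∑ a ∈ Finset.range (v+1), ((v.choose a : ℝ) / (((u+1)+v).choose (a+(b+1)))))
          + ∑ a ∈ Finset.range (v+1+1), ((v.choose a : ℝ) / (((u+1)+v).choose (a+b))) := by
      rw [Finset.sum_range_succ' (fun a => ((v+1).choose a : ℝ) / ((u+(v+1)).choose (a+b)))]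
      rw [Finset.sum_range_succ' (fun a => ((v.choose a : ℝ) / (((u+1)+v).choose (a+b))))]
      have : ∀ a ∈ Finset.range (v+1),
          (((v+1).choose (a+1) : ℝ) / ((u+(v+1)).choose ((a+1)+b)))
          = ((v.choose a : ℝ) / (((u+1)+v).choose (a+(b+1))))
            + ((v.choose (a+1) : ℝ) / (((u+1)+v).choose ((a+1)+b))) := by
        intro a _
        rw [Nat.choose_succ_succ]
        push_cast
        rw [add_div]
        have e1 : u+(v+1) = (u+1)+v := by omega
        have e2 : a+1+b = a+(b+1) := by omega
        rw [e1, e2]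
      rw [Finset.sum_congr rfl this, Finset.sum_add_distrib]
      have e1 : u+(v+1) = (u+1)+v := by omega
      rw [e1]
      simp only [Nat.choose_zero_right]
      push_cast
      ring
    rw [step, hg, ih (u+1) (b+1) (by omega), ih (u+1) b (by omega)]
    have hr := recip u b hb
    have n0 : ((u.choose b:ℝ)) ≠ 0 := Nat.cast_ne_zero.2 (Nat.choose_pos hb).ne'
    have n1 : (((u+1).choose b : ℝ)) ≠ 0 := Nat.cast_ne_zero.2 (Nat.choose_pos (by omega)).ne'
    have n2 : (((u+1).choose (b+1) : ℝ)) ≠ 0 := Nat.cast_ne_zero.2 (Nat.choose_pos (by omega)).ne'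
    have nu : ((u:ℝ)+1) ≠ 0 := by positivity
    have nu2 : ((u:ℝ)+2) ≠ 0 := by positivity
    push_cast
    have c1 : (((u+1).choose b : ℕ) : ℝ) = ((u+1).choose b : ℝ) := rfl
    calc ((u:ℝ)+1+↑v+1)/((↑u+1+1)*((u+1).choose (b+1))) + (↑u+1+↑v+1)/((↑u+1+1)*((u+1).choose b))
        = ((↑u+↑v+2)/(↑u+2)) * ((1:ℝ)/((u+1).choose b) + 1/((u+1).choose (b+1))) := by field_simp; ring
      _ = ((↑u+↑v+2)/(↑u+2)) * (((u:ℝ)+2)/(((u:ℝ)+1)*(u.choose b))) := by rw [hr]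
      _ = (↑u+(↑v+1)+1)/((↑u+1)*(u.choose b)) := by field_simp; ring
theorem sti_knn_coefficient_D2 (n k j : ℕ)
    (hk : 1 ≤ k) (hj : k + 2 ≤ j) (hjn : j ≤ n) :
    ∑ s ∈ Finset.Icc (k - 1) (n - 3),
        (((j - 3).choose (k - 1) : ℝ) * ((n - j).choose (s + 1 - k))) /
          ((n - 1).choose (s + 1)) =
      ((k : ℝ) / ((j : ℝ) - 1)) * (((j : ℝ) - k - 1) / ((j : ℝ) - 2)) *
        ((n : ℝ) / j) := by
  obtain ⟨c, rfl⟩ : ∃ c, k = c+1 := ⟨k-1, by omega⟩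
  obtain ⟨m, rfl⟩ : ∃ m, j = m+3 := ⟨j-3, by omega⟩
  have hcm : c ≤ m := by omega
  have hn : m+3 ≤ n := hjn
  -- step 1: reindex
  have hIcc : Finset.Icc (c+1-1) (n-3) = Finset.Ico c (n-2) := by
    rw [← Finset.Ico_add_one_right_eq_Icc]
    congr 1 <;> omega
  rw [hIcc, Finset.sum_Ico_eq_sum_range]
  have hr1 : n-2-c = n-c-2 := by omega
  rw [hr1]
  have step1 : ∀ a ∈ Finset.range (n-c-2),
      (((m+3-3).choose (c+1-1) : ℝ) * ((n-(m+3)).choose (c+a+1-(c+1)))) /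
        ((n-1).choose (c+a+1))
      = (m.choose c : ℝ) * (((n-(m+3)).choose a : ℝ) / ((n-1).choose (a+(c+1)))) := by
    intro a _
    have e1 : m+3-3 = m := by omega
    have e2 : c+1-1 = c := by omega
    have e3 : c+a+1-(c+1) = a := by omega
    have e4 : c+a+1 = a+(c+1) := by omega
    rw [e1, e2, e3, e4, mul_div_assoc]
  rw [Finset.sum_congr rfl step1, ← Finset.mul_sum]
  -- step 2: shrink the range to n-(m+3)+1
  have sub : Finset.range (n-(m+3)+1) ⊆ Finset.range (n-c-2) :=
    Finset.range_subset_range.2 (by omega)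
  have shrink : ∑ a ∈ Finset.range (n-(m+3)+1),
        (((n-(m+3)).choose a : ℝ) / ((n-1).choose (a+(c+1))))
      = ∑ a ∈ Finset.range (n-c-2),
        (((n-(m+3)).choose a : ℝ) / ((n-1).choose (a+(c+1)))) := by
    apply Finset.sum_subset sub
    intro a _ ha
    have : n-(m+3) < a := by
      simp only [Finset.mem_range] at ha; omega
    rw [Nat.choose_eq_zero_of_lt this]
    simp
  rw [← shrink]
  -- step 3: apply key with u = m+2, v = n-(m+3), b = c+1
  have huv : (m+2) + (n-(m+3)) = n-1 := by omega
  have hkey := key (n-(m+3)) (m+2) (c+1) (by omega)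
  rw [huv] at hkey
  rw [hkey]
  -- step 4: algebra
  have hnm : ((n-(m+3) : ℕ) : ℝ) = (n:ℝ) - (m+3) := by
    push_cast [hn]; ring
  rw [hnm]
  have eA : ((m:ℝ)+1) * m.choose c = ((m+1).choose (c+1) : ℝ) * ((c:ℝ)+1) := by
    exact_mod_cast Nat.add_one_mul_choose_eq m c
  have eB : ((m:ℝ)+2) * ((m+1).choose (c+1) : ℝ) = ((m+2).choose (c+1) : ℝ) * ((m:ℝ)+1-c) := by
    have hnat : (m+2) * (m+1).choose (c+1) = (m+2).choose (c+1) * (m+2-(c+1)) := by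
      rw [← Nat.choose_succ_right_eq, ← Nat.add_one_mul_choose_eq]
    have hcast : ((m+2-(c+1) : ℕ) : ℝ) = (m:ℝ)+1-c := by
      have h2 : m+2-(c+1) = m+1-c := by omega
      rw [h2, Nat.cast_sub (by omega : c ≤ m+1)]
      push_cast; ring
    calc ((m:ℝ)+2) * ((m+1).choose (c+1) : ℝ) = (((m+2) * (m+1).choose (c+1) : ℕ) : ℝ) := by push_cast; ring
      _ = (((m+2).choose (c+1) * (m+2-(c+1)) : ℕ) : ℝ) := by rw [hnat]
      _ = ((m+2).choose (c+1) : ℝ) * ((m:ℝ)+1-c) := by rw [Nat.cast_mul, hcast]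
  have e : ((m.choose c : ℝ)) * ((m:ℝ)+1) * ((m:ℝ)+2)
      = ((c:ℝ)+1) * ((m:ℝ)+1-c) * ((m+2).choose (c+1) : ℝ) := by
    linear_combination ((m:ℝ)+2) * eA + ((c:ℝ)+1) * eB
  have n2 : (((m+2).choose (c+1) : ℝ)) ≠ 0 := Nat.cast_ne_zero.2 (Nat.choose_pos (by omega)).ne'
  have hm1 : ((m:ℝ)+1) ≠ 0 := by positivity
  have hm2 : ((m:ℝ)+2) ≠ 0 := by positivity
  have hm3 : ((m:ℝ)+3) ≠ 0 := by positivity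
  have ha : ((m:ℝ)+3-1) ≠ 0 := by
    intro h; have : (0:ℝ) < (m:ℝ)+2 := by positivity
    linarith
  have hb : ((m:ℝ)+3-2) ≠ 0 := by
    intro h; have : (0:ℝ) < (m:ℝ)+1 := by positivity
    linarith
  push_cast
  field_simp [ha, hb]
  linear_combination ((n:ℝ)) * ((m:ℝ)+3) * e
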